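/- Let c ∈ ℂ and R = ℂ[t, t^{-1}, u | u² = t⁴ − 2ct² + 1]. Let (P_{−3,k})_{k ≥ −4} be the sequence of complex numbers determined by the initial values P_{−3,−4} = 0, P_{−3,−3} = 1, P_{−3,−2} = 0, P_{−3,−1} = 0 and the recursion (6+2k)P_{−3,k} = 4kc·P_{−3,k−2} − 2(k−3)·P_{−3,k−4} for k ≥ 0. Then for every odd integer k ≥ 1, in Ω¹_R/dR one has (class of t^k u dt) = P_{−3,k}·(ω_{−3} + c ω_{−1}). -/

import Mathlib

noncomputable section
open Polynomial LaurentPolynomial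

set_option maxHeartbeats 1000000
set_option synthInstance.maxHeartbeats 200000
set_option maxRecDepth 8000

/-- The ring `R = ℂ[t,t⁻¹][u]/(u² − (t⁴ − 2ct² + 1))`, realized by adjoining a root `u`
of `X² − (t⁴ − 2ct² + 1)` to the ring of Laurent polynomials `ℂ[t,t⁻¹]`. -/
abbrev DJKM (c : ℂ) : Type :=
  AdjoinRoot ((X : Polynomial (LaurentPolynomial ℂ)) ^ 2 -
    Polynomial.C (T 4 - 2 * LaurentPolynomial.C c * T 2 + 1))

/-- The element `t^i` of `R`, for `i : ℤ`. -/
def tp (c : ℂ) (i : ℤ) : DJKM c := AdjoinRoot.of _ (T i)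

/-- The element `u` of `R`. -/
def uu (c : ℂ) : DJKM c := AdjoinRoot.root _

/-- The subspace `dR ⊆ Ω¹_R` of exact differentials. -/
def dR (c : ℂ) : Submodule ℂ (KaehlerDifferential ℂ (DJKM c)) :=
  LinearMap.range (KaehlerDifferential.D ℂ (DJKM c)).toLinearMap

/-- The class of `f·dg` in `Ω¹_R/dR`. -/
def cls (c : ℂ) (f g : DJKM c) : KaehlerDifferential ℂ (DJKM c) ⧸ dR c :=
  Submodule.Quotient.mk (f • KaehlerDifferential.D ℂ (DJKM c) g)

/-- `ω_k` : the class of `t^k·u·dt` in `Ω¹_R/dR`. -/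
def w (c : ℂ) (k : ℤ) : KaehlerDifferential ℂ (DJKM c) ⧸ dR c :=
  cls c (tp c k * uu c) (tp c 1)

/-- `ω₀` : the class of `t⁻¹·dt` in `Ω¹_R/dR`. -/
def w0 (c : ℂ) : KaehlerDifferential ℂ (DJKM c) ⧸ dR c :=
  cls c (tp c (-1)) (tp c 1)

section Aux

variable (c : ℂ)

local notation "Dd" => KaehlerDifferential.D ℂ (DJKM c)
local notation "π" => Submodule.mkQ (dR c)

lemma tp_mul (i j : ℤ) : tp c i * tp c j = tp c (i + j) := by
  rw [tp, tp, tp, T_add, map_mul]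

lemma tp_zero : tp c 0 = 1 := by rw [tp, T_zero, map_one]

lemma algc (a : ℂ) : algebraMap ℂ (DJKM c) a = AdjoinRoot.of _ (LaurentPolynomial.C a) := by
  rw [IsScalarTower.algebraMap_apply ℂ (LaurentPolynomial ℂ) (DJKM c)]
  rw [AdjoinRoot.algebraMap_eq]
  rfl

lemma uu_mul_uu : uu c * uu c = tp c 4 - (2*c) • tp c 2 + 1 := by
  have h := AdjoinRoot.mk_self (f := (X : Polynomial (LaurentPolynomial ℂ)) ^ 2 -
    Polynomial.C (T 4 - 2 * LaurentPolynomial.C c * T 2 + 1))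
  rw [map_sub, map_pow, AdjoinRoot.mk_C, sub_eq_zero] at h
  have e : (2 : LaurentPolynomial ℂ) * LaurentPolynomial.C c = LaurentPolynomial.C (2*c) := by
    rw [map_mul, map_ofNat]
  rw [uu, ← AdjoinRoot.mk_X, ← pow_two, h, Algebra.smul_def, algc, tp, tp]
  conv_rhs => rw [← map_mul, ← map_one (AdjoinRoot.of ((X : Polynomial (LaurentPolynomial ℂ)) ^ 2 -
    Polynomial.C (T 4 - 2 * LaurentPolynomial.C c * T 2 + 1))), ← map_sub, ← map_add]
  congr 1
  rw [e]

lemma Dtp_neg_one : Dd (tp c (-1)) = -(tp c (-2) • Dd (tp c 1)) := by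
  have h0 : tp c 1 * tp c (-1) = 1 := by rw [tp_mul]; exact tp_zero c
  have h := Derivation.leibniz Dd (tp c 1) (tp c (-1))
  rw [h0, Derivation.map_one_eq_zero] at h
  have h2 := congrArg (fun m => tp c (-1) • m) h.symm
  simp only [smul_add, smul_smul, smul_zero] at h2
  rw [mul_comm (tp c (-1)) (tp c 1), h0, one_smul] at h2
  rw [tp_mul] at h2
  norm_num at h2
  linear_combination (norm := module) h2

lemma Dtp (n : ℤ) : Dd (tp c n) = (n:ℂ) • (tp c (n-1) • Dd (tp c 1)) := by
  induction n using Int.induction_on with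
  | zero => rw [tp_zero, Derivation.map_one_eq_zero]; norm_num
  | succ n ih =>
    have : tp c ((n:ℤ)+1) = tp c n * tp c 1 := by rw [tp_mul]
    rw [this, Derivation.leibniz, ih]
    have e1 : tp c 1 * tp c ((n:ℤ)-1) = tp c n := by rw [tp_mul]; congr 1; ring
    rw [smul_comm, smul_smul, e1]
    push_cast
    have : ((n:ℤ)+1-1 : ℤ) = (n:ℤ) := by ring
    rw [this]
    module
  | pred n ih =>
    have : tp c (-(n:ℤ)-1) = tp c (-n) * tp c (-1) := by rw [tp_mul, sub_eq_add_neg]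
    rw [this, Derivation.leibniz, ih, Dtp_neg_one]
    have e1 : tp c (-1) * tp c (-(n:ℤ)-1) = tp c (-(n:ℤ)-2) := by rw [tp_mul]; congr 1; ring
    have e2 : tp c (-(n:ℤ)) • (tp c (-2:ℤ) • Dd (tp c 1)) = tp c (-(n:ℤ)-2) • Dd (tp c 1) := by
      rw [smul_smul, tp_mul]
      have h9 : (-(n:ℤ) + -2) = (-(n:ℤ) - 2) := by ring
      rw [h9]
    rw [smul_neg, e2, smul_comm, smul_smul, e1]
    have : (-(n:ℤ)-1-1 : ℤ) = (-(n:ℤ)-2) := by ring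
    rw [this]
    push_cast
    module

lemma pi_D (f : DJKM c) : π (Dd f) = 0 := by
  rw [Submodule.mkQ_apply, Submodule.Quotient.mk_eq_zero]
  exact ⟨f, rfl⟩

lemma w_eq (k : ℤ) : w c k = π ((tp c k * uu c) • Dd (tp c 1)) := rfl

lemma hB (m : ℤ) : π (tp c m • Dd (uu c)) = -((m:ℂ) • w c (m-1)) := by
  have h0 : π (Dd (tp c m * uu c)) = 0 := pi_D c _
  rw [Derivation.leibniz, Dtp] at h0
  have e : uu c • ((m:ℂ) • (tp c (m-1) • Dd (tp c 1)))
      = (m:ℂ) • ((tp c (m-1) * uu c) • Dd (tp c 1)) := by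
    rw [smul_comm]
    congr 1
    rw [smul_smul]
    exact congrArg (fun r => r • Dd (tp c 1)) (mul_comm _ _)
  rw [e] at h0
  simp only [map_add, map_smul] at h0
  rw [w_eq]
  exact eq_neg_of_add_eq_zero_left h0

lemma smul_congr {x : KaehlerDifferential ℂ (DJKM c)} {r s : DJKM c} (h : r = s) :
    r • x = s • x := congrArg (· • x) h

lemma keyL (m : ℤ) : π ((tp c m * uu c) • Dd (uu c * uu c))
    = (-2*(m:ℂ)-8) • w c (m+3) + (4*c*((m:ℂ)+2)) • w c (m+1) + (-2*(m:ℂ)) • w c (m-1) := by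
  have e1 : tp c m * (uu c * uu c) = tp c (m+4) - (2*c) • tp c (m+2) + tp c m := by
    rw [uu_mul_uu, mul_add, mul_sub, mul_one, tp_mul, mul_smul_comm, tp_mul]
  have g1 : tp c m * uu c * uu c = tp c (m+4) - (2*c) • tp c (m+2) + tp c m := by
    rw [mul_assoc]; exact e1
  have e2 : (tp c m * uu c) • Dd (uu c * uu c)
      = (tp c (m+4) • Dd (uu c) - (2*c) • (tp c (m+2) • Dd (uu c)) + tp c m • Dd (uu c))
        + (tp c (m+4) • Dd (uu c) - (2*c) • (tp c (m+2) • Dd (uu c)) + tp c m • Dd (uu c)) := by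
    rw [Derivation.leibniz, smul_add, smul_smul, g1]
    simp only [add_smul, sub_smul, smul_assoc]
  rw [e2]
  simp only [map_add, map_sub, LinearMap.map_smul, hB]
  have i1 : (m+4-1 : ℤ) = m+3 := by ring
  have i2 : (m+2-1 : ℤ) = m+1 := by ring
  rw [i1, i2]
  push_cast
  module

lemma keyR (m : ℤ) : π ((tp c m * uu c) • Dd (uu c * uu c))
    = (4:ℂ) • w c (m+3) - (4*c) • w c (m+1) := by
  have e1 : Dd (uu c * uu c)
      = ((4:ℤ):ℂ) • (tp c 3 • Dd (tp c 1)) - (2*c) • (((2:ℤ):ℂ) • (tp c 1 • Dd (tp c 1))) := by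
    rw [uu_mul_uu]
    simp only [map_add, map_sub, Derivation.map_smul, Derivation.map_one_eq_zero, add_zero]
    rw [Dtp c 4, Dtp c 2]
    norm_num
  have f1 : tp c m * uu c * tp c 3 = tp c (m+3) * uu c := by
    rw [mul_right_comm, tp_mul]
  have f2 : tp c m * uu c * tp c 1 = tp c (m+1) * uu c := by
    rw [mul_right_comm, tp_mul]
  have e2 : (tp c m * uu c) • Dd (uu c * uu c)
      = (4:ℂ) • ((tp c (m+3) * uu c) • Dd (tp c 1))
        - (4*c) • ((tp c (m+1) * uu c) • Dd (tp c 1)) := by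
    rw [e1, smul_sub, ← smul_comm ((4:ℤ):ℂ), ← smul_comm ((2*c)), ← smul_comm ((2:ℤ):ℂ),
      smul_smul (tp c m * uu c) (tp c 3), smul_smul (tp c m * uu c) (tp c 1),
      smul_congr c f1, smul_congr c f2, smul_smul (2*c) (((2:ℤ):ℂ))]
    have j1 : ((4:ℤ):ℂ) = 4 := by norm_num
    have j2 : (2*c*((2:ℤ):ℂ)) = 4*c := by push_cast; ring
    rw [j1, j2]
  have h := congrArg (fun x => π x) e2
  rw [map_sub, LinearMap.map_smul, LinearMap.map_smul] at h
  rw [h, ← w_eq, ← w_eq]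

lemma key (k : ℤ) : (2*(k:ℂ)+6) • w c k
    = (4*c*(k:ℂ)) • w c (k-2) - (2*((k:ℂ)-3)) • w c (k-4) := by
  have h := (keyL c (k-3)).symm.trans (keyR c (k-3))
  have i1 : (k-3+3 : ℤ) = k := by ring
  have i2 : (k-3+1 : ℤ) = k-2 := by ring
  have i3 : (k-3-1 : ℤ) = k-4 := by ring
  rw [i1, i2, i3] at h
  push_cast at h
  linear_combination (norm := module) -h

end Aux

/-- For odd `k ≥ 1`, the class of `t^k u dt` equals `P_{−3,k}·(ω₋₃ + c·ω₋₁)`. -/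
theorem stmt8 (c : ℂ) (P : ℤ → ℂ)
    (h4 : P (-4) = 0) (h3 : P (-3) = 1) (h2 : P (-2) = 0) (h1 : P (-1) = 0)
    (hrec : ∀ k : ℤ, 0 ≤ k →
      ((6 : ℂ) + 2 * (k : ℂ)) * P k = 4 * (k : ℂ) * c * P (k - 2) - 2 * ((k : ℂ) - 3) * P (k - 4)) :
    ∀ k : ℤ, 1 ≤ k → Odd k → w c k = P k • (w c (-3) + c • w c (-1)) := by
  have cancel : ∀ (a : ℂ), a ≠ 0 →
      ∀ x y : (KaehlerDifferential ℂ (DJKM c) ⧸ dR c), a • x = a • y → x = y := by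
    intro a ha x y h
    have h2 := congrArg (fun z => a⁻¹ • z) h
    simpa [smul_smul, inv_mul_cancel₀ ha] using h2
  set v := w c (-3) + c • w c (-1) with hv
  have main : ∀ n : ℕ, w c (2*(n:ℤ)+1) = P (2*(n:ℤ)+1) • v := by
    intro n
    induction n using Nat.strong_induction_on with
    | _ n ih =>
      match n, ih with
      | 0, _ =>
        norm_num
        have k1 := key c 1
        rw [show ((1:ℤ)-2) = -1 from by norm_num, show ((1:ℤ)-4) = -3 from by norm_num] at k1
        push_cast at k1
        have p1 := hrec 1 (by norm_num)
        rw [show ((1:ℤ)-2) = -1 from by norm_num, show ((1:ℤ)-4) = -3 from by norm_num,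
          h1, h3] at p1
        push_cast at p1
        have pv := congrArg (fun a : ℂ => a • v) p1
        apply cancel (2*(1:ℂ)+6) (by norm_num)
        rw [hv]
        linear_combination (norm := module) k1 - pv
      | 1, ih =>
        have ih0 := ih 0 (by norm_num)
        norm_num at ih0 ⊢
        have k3 := key c 3
        rw [show ((3:ℤ)-2) = 1 from by norm_num, show ((3:ℤ)-4) = -1 from by norm_num] at k3
        push_cast at k3
        have p3 := hrec 3 (by norm_num)
        rw [show ((3:ℤ)-2) = 1 from by norm_num, show ((3:ℤ)-4) = -1 from by norm_num,
          h1] at p3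
        push_cast at p3
        have pv := congrArg (fun a : ℂ => a • v) p3
        apply cancel (2*(3:ℂ)+6) (by norm_num)
        rw [hv]
        linear_combination (norm := module) k3 - pv + (4*c*(3:ℂ)) • ih0
      | (m+2), ih =>
        have ih1 := ih (m+1) (by omega)
        have ih0 := ih m (by omega)
        have kk := key c (2*(m:ℤ)+5)
        rw [show (2*(m:ℤ)+5-2) = 2*(m:ℤ)+3 from by ring,
          show (2*(m:ℤ)+5-4) = 2*(m:ℤ)+1 from by ring] at kk
        have pp := hrec (2*(m:ℤ)+5) (by omega)
        rw [show (2*(m:ℤ)+5-2) = 2*(m:ℤ)+3 from by ring,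
          show (2*(m:ℤ)+5-4) = 2*(m:ℤ)+1 from by ring] at pp
        have pv := congrArg (fun a : ℂ => a • v) pp
        have ie : (2*((m:ℤ)+2)+1) = 2*(m:ℤ)+5 := by ring
        have ie1 : (2*((m:ℤ)+1)+1) = 2*(m:ℤ)+3 := by ring
        push_cast at ih1 ih0 ⊢
        rw [ie1] at ih1
        rw [ie]
        have hne : (2*((2*(m:ℤ)+5 : ℤ):ℂ)+6) ≠ 0 := by
          push_cast
          intro h
          have : ((4*m+16 : ℕ):ℂ) = 0 := by push_cast; linear_combination h
          rw [Nat.cast_eq_zero] at this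
          omega
        apply cancel _ hne
        push_cast at kk pp pv ⊢
        linear_combination (norm := module) kk - pv
          + (4*c*(2*(m:ℂ)+5)) • ih1 - (2*((2*(m:ℂ)+5)-3)) • ih0
  intro k hk hodd
  obtain ⟨j, hj⟩ := hodd
  have hj0 : 0 ≤ j := by omega
  obtain ⟨n, rfl⟩ := Int.eq_ofNat_of_zero_le hj0
  have := main n
  rw [show (2*(n:ℤ)+1) = k from by omega] at this
  exact this
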